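/- Fix p ∈ (1,∞) and 1 ≤ r < q < ∞. Let (X,μ) be a measure space admitting a sequence of pairwise disjoint measurable sets E₁, E₂, … with 0 < μ(E_n) < ∞ and μ(E_n) ≥ μ(E₁ ∪ ⋯ ∪ E_{n−1}) for each n ≥ 2. For n₀ ∈ ℕ define g_{n₀} = ∑_{n=1}^{n₀} n^{−2/(q+r)} μ(E_n)^{−1/p} χ_{E_n}. Then ‖g_{n₀}‖_{p,r} / ‖g_{n₀}‖_{p,q} → ∞ as n₀ → ∞. -/

import Mathlib

open MeasureTheory ENNReal NNReal Set Filter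

/-- The distribution function `d_f(t) = μ {x : t ≤ |f x|}`. -/
noncomputable def distFun {X : Type*} [MeasurableSpace X] (μ : Measure X) (f : X → ℝ) (t : ℝ) :
    ℝ≥0∞ :=
  μ {x | t ≤ |f x|}

/-- The Lorentz quasi-norm `‖f‖_{p,q}` (with `q = ⊤` giving the weak-type norm). -/
noncomputable def lorentzNorm {X : Type*} [MeasurableSpace X] (μ : Measure X) (p : ℝ)
    (q : ℝ≥0∞) (f : X → ℝ) : ℝ≥0∞ :=
  if q = ⊤ then ⨆ t ∈ Ioi (0 : ℝ), ENNReal.ofReal t * distFun μ f t ^ (1 / p)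
  else ENNReal.ofReal p ^ (1 / q.toReal) *
    (∫⁻ t in Ioi (0 : ℝ),
      (ENNReal.ofReal t * distFun μ f t ^ (1 / p)) ^ q.toReal / ENNReal.ofReal t) ^ (1 / q.toReal)

private lemma abel_id (W v : ℕ → ℝ) (N : ℕ) :
    ∑ n ∈ Finset.range N, W (n + 1) * (v n - v (n + 1))
      = ∑ n ∈ Finset.range N, (W (n + 1) - W n) * v n + W 0 * v 0 - W N * v N := by
  induction N with
  | zero => simp
  | succ M ih =>
      rw [Finset.sum_range_succ, Finset.sum_range_succ (f := fun n => (W (n+1) - W n) * v n), ih]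
      ring

private lemma abel_ineq (W v u : ℕ → ℝ) (N : ℕ) (hW0 : W 0 = 0) (hvN : v N = 0)
    (h : ∀ n, n < N → u n ≤ (W (n + 1) - W n) * v n) :
    ∑ n ∈ Finset.range N, u n ≤ ∑ n ∈ Finset.range N, W (n + 1) * (v n - v (n + 1)) := by
  have h1 : ∑ n ∈ Finset.range N, u n ≤ ∑ n ∈ Finset.range N, (W (n + 1) - W n) * v n :=
    Finset.sum_le_sum fun n hn => h n (Finset.mem_range.1 hn)
  have h2 := abel_id W v N
  rw [hW0, hvN] at h2
  linarith

private lemma lintegral_Ioc_rpow {a b s : ℝ} (ha : 0 ≤ a) (hab : a ≤ b) (hs : 1 ≤ s) :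
    ∫⁻ t in Ioc a b, ENNReal.ofReal t ^ (s - 1) = ENNReal.ofReal ((b ^ s - a ^ s) / s) := by
  have h1 : ∫⁻ t in Ioc a b, ENNReal.ofReal t ^ (s - 1)
      = ∫⁻ t in Ioc a b, ENNReal.ofReal (t ^ (s - 1)) := by
    refine setLIntegral_congr_fun measurableSet_Ioc (fun t ht => ?_)
    exact ENNReal.ofReal_rpow_of_pos (ha.trans_lt ht.1)
  have hint : IntegrableOn (fun t => t ^ (s - 1)) (Ioc a b) := by
    have h := intervalIntegral.intervalIntegrable_rpow' (a := a) (b := b) (r := s - 1)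
      (by linarith)
    rwa [intervalIntegrable_iff_integrableOn_Ioc_of_le hab] at h
  have hnn : 0 ≤ᵐ[volume.restrict (Ioc a b)] fun t => t ^ (s - 1) :=
    (ae_restrict_iff' measurableSet_Ioc).2
      (ae_of_all _ fun t ht => Real.rpow_nonneg (ha.trans ht.1.le) _)
  rw [h1, ← ofReal_integral_eq_lintegral_ofReal hint hnn]
  congr 1
  rw [← intervalIntegral.integral_of_le hab, integral_rpow (Or.inl (by linarith))]
  rw [show s - 1 + 1 = s from by ring]

private lemma summable_shift_rpow {c : ℝ} (hc : 1 < c) :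
    Summable (fun n : ℕ => ((n : ℝ) + 1) ^ (-c)) := by
  have h : Summable (fun n : ℕ => 1 / ((n : ℝ)) ^ c) := Real.summable_one_div_nat_rpow.2 hc
  have h2 := (_root_.summable_nat_add_iff 1).2 h
  refine h2.congr fun n => ?_
  push_cast
  rw [Real.rpow_neg (by positivity), one_div]

private lemma tendsto_sum_rpow_atTop {c : ℝ} (hc : c ≤ 1) :
    Tendsto (fun N => ∑ n ∈ Finset.range N, ((n : ℝ) + 1) ^ (-c)) atTop atTop := by
  have hnn : ∀ n : ℕ, 0 ≤ ((n : ℝ) + 1) ^ (-c) := fun n => Real.rpow_nonneg (by positivity) _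
  rw [← not_summable_iff_tendsto_nat_atTop_of_nonneg hnn]
  intro hsum
  have h2 : Summable (fun n : ℕ => 1 / ((n : ℝ)) ^ c) := by
    rw [← _root_.summable_nat_add_iff 1]
    refine hsum.congr fun n => ?_
    push_cast
    rw [Real.rpow_neg (by positivity), one_div]
  rw [Real.summable_one_div_nat_rpow] at h2
  linarith

theorem lorentz_ratio_tendsto_top {X : Type*} [MeasurableSpace X] (μ : Measure X)
    (p q r : ℝ) (hp : 1 < p) (hr : 1 ≤ r) (hrq : r < q)
    (E : ℕ → Set X) (hmeas : ∀ n, MeasurableSet (E n))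
    (hdisj : Pairwise (Function.onFun Disjoint E))
    (hpos : ∀ n, 0 < μ (E n)) (hfin : ∀ n, μ (E n) < ⊤)
    (hgrow : ∀ n : ℕ, μ (⋃ k ∈ Finset.range n, E k) ≤ μ (E n)) :
    Tendsto (fun n₀ : ℕ =>
        lorentzNorm μ p (ENNReal.ofReal r)
          (fun x => ∑ n ∈ Finset.range n₀, (E n).indicator
            (fun _ => ((n : ℝ) + 1) ^ (-(2 / (q + r))) * (μ (E n)).toReal ^ (-(1 / p))) x) /
        lorentzNorm μ p (ENNReal.ofReal q)
          (fun x => ∑ n ∈ Finset.range n₀, (E n).indicator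
            (fun _ => ((n : ℝ) + 1) ^ (-(2 / (q + r))) * (μ (E n)).toReal ^ (-(1 / p))) x))
      atTop (nhds ⊤) := by
  classical
  have hp0 : (0:ℝ) < p := lt_trans one_pos hp
  have hr0 : (0:ℝ) < r := lt_of_lt_of_le one_pos hr
  have hq1 : (1:ℝ) < q := lt_of_le_of_lt hr hrq
  have hq0 : (0:ℝ) < q := lt_trans one_pos hq1
  have hqr0 : (0:ℝ) < q + r := by linarith
  set α : ℝ := 2 / (q + r) with hαdef
  have hα0 : 0 < α := by rw [hαdef]; exact div_pos two_pos hqr0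
  have hαr1 : α * r ≤ 1 := by
    rw [hαdef, div_mul_eq_mul_div, div_le_one hqr0]; linarith
  have hαr0 : 0 < α * r := by positivity
  have hαq1 : 1 < α * q := by
    rw [hαdef, div_mul_eq_mul_div, lt_div_iff₀ hqr0]; linarith
  set τ : ℕ → ℝ := fun n => (μ (E n)).toReal with hτdef
  set c : ℕ → ℝ := fun n => ((n : ℝ) + 1) ^ (-α) * τ n ^ (-(1 / p)) with hcdef
  set g : ℕ → X → ℝ := fun N x => ∑ n ∈ Finset.range N, (E n).indicator (fun _ => c n) x
    with hgdef
  suffices hsuff : Tendsto (fun N : ℕ =>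
      lorentzNorm μ p (ENNReal.ofReal r) (g N) / lorentzNorm μ p (ENNReal.ofReal q) (g N))
      atTop (nhds ⊤) by exact hsuff
  -- basic facts
  have hτpos : ∀ n, 0 < τ n := fun n => ENNReal.toReal_pos (hpos n).ne' (hfin n).ne
  have hτnonneg : ∀ n, 0 ≤ τ n := fun n => (hτpos n).le
  have hc0 : ∀ n, 0 < c n := fun n =>
    mul_pos (Real.rpow_pos_of_pos (by positivity) _) (Real.rpow_pos_of_pos (hτpos n) _)
  have hμmono : ∀ ⦃m n : ℕ⦄, m ≤ n → μ (E m) ≤ μ (E n) := by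
    intro m n hmn
    rcases eq_or_lt_of_le hmn with h | h
    · rw [h]
    · exact le_trans
        (measure_mono fun x hx => Set.mem_iUnion₂.2 ⟨m, Finset.mem_range.2 h, hx⟩) (hgrow n)
  have hτmono : ∀ ⦃m n : ℕ⦄, m ≤ n → τ m ≤ τ n := fun m n h =>
    (ENNReal.toReal_le_toReal (hfin m).ne (hfin n).ne).2 (hμmono h)
  have hcanti : ∀ ⦃m n : ℕ⦄, m ≤ n → c n ≤ c m := by
    intro m n hmn
    have hcast : ((m : ℝ)) + 1 ≤ (n : ℝ) + 1 := by
      have := (Nat.cast_le (α := ℝ)).2 hmn; linarith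
    have h1 : ((n : ℝ) + 1) ^ (-α) ≤ ((m : ℝ) + 1) ^ (-α) :=
      Real.rpow_le_rpow_of_nonpos (by positivity) hcast (neg_nonpos.2 hα0.le)
    have h2 : τ n ^ (-(1 / p)) ≤ τ m ^ (-(1 / p)) :=
      Real.rpow_le_rpow_of_nonpos (hτpos m) (hτmono hmn) (neg_nonpos.2 (by positivity))
    exact mul_le_mul h1 h2 (Real.rpow_nonneg (hτnonneg n) _) (Real.rpow_nonneg (by positivity) _)
  -- the partial union measures
  set S : ℕ → ℝ≥0∞ := fun m => μ (⋃ k ∈ Finset.range m, E k) with hSdef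
  have hgrow' : ∀ n, S n ≤ μ (E n) := hgrow
  have hS_succ : ∀ m, S (m + 1) = S m + μ (E m) := by
    intro m
    have hdisjU : Disjoint (⋃ k ∈ Finset.range m, E k) (E m) := by
      refine Set.disjoint_left.2 fun x hx hxm => ?_
      obtain ⟨k, hk, hxk⟩ := Set.mem_iUnion₂.1 hx
      exact Set.disjoint_left.1 (hdisj (Nat.ne_of_lt (Finset.mem_range.1 hk))) hxk hxm
    have hU : (⋃ k ∈ Finset.range (m + 1), E k) = (⋃ k ∈ Finset.range m, E k) ∪ E m := by
      rw [Finset.range_add_one]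
      simp only [Finset.set_biUnion_insert]
      rw [Set.union_comm]
    show μ (⋃ k ∈ Finset.range (m + 1), E k) = μ (⋃ k ∈ Finset.range m, E k) + μ (E m)
    rw [hU, measure_union hdisjU (hmeas m)]
  have hS0 : S 0 = 0 := by
    show μ (⋃ k ∈ Finset.range 0, E k) = 0
    simp
  have hS_fin : ∀ m, S m < ⊤ := by
    intro m
    cases m with
    | zero => rw [hS0]; exact ENNReal.zero_lt_top
    | succ m => rw [hS_succ m]; exact ENNReal.add_lt_top.2 ⟨lt_of_le_of_lt (hgrow' m) (hfin m), hfin m⟩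
  set T : ℕ → ℝ := fun m => (S m).toReal with hTdef
  have hT0 : T 0 = 0 := by rw [hTdef]; simp [hS0]
  have hT_succ : ∀ m, T (m + 1) = T m + τ m := by
    intro m
    rw [hTdef]
    simp only
    rw [hS_succ m, ENNReal.toReal_add (hS_fin m).ne (hfin m).ne]
  have hTnonneg : ∀ m, 0 ≤ T m := fun m => ENNReal.toReal_nonneg
  have hTτ : ∀ m, T m ≤ τ m := fun m =>
    (ENNReal.toReal_le_toReal (hS_fin m).ne (hfin m).ne).2 (hgrow' m)
  have hτT : ∀ m, τ m ≤ T (m + 1) := by intro m; rw [hT_succ m]; linarith [hTnonneg m]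
  have hT2 : ∀ m, 2 * T m ≤ T (m + 1) := by intro m; rw [hT_succ m]; linarith [hTτ m]
  have hSofT : ∀ m, S m = ENNReal.ofReal (T m) := fun m => (ENNReal.ofReal_toReal (hS_fin m).ne).symm
  -- values of g
  have hgval : ∀ N k (x : X), k < N → x ∈ E k → g N x = c k := by
    intro N k x hkN hx
    simp only [hgdef]
    rw [Finset.sum_eq_single_of_mem k (Finset.mem_range.2 hkN)]
    · rw [Set.indicator_of_mem hx]
    · intro n _ hnk
      exact Set.indicator_of_notMem (fun hxn => Set.disjoint_left.1 (hdisj hnk) hxn hx) _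
  have hgnonneg : ∀ N (x : X), 0 ≤ g N x := by
    intro N x
    simp only [hgdef]
    exact Finset.sum_nonneg fun n _ => Set.indicator_nonneg (fun _ _ => (hc0 n).le) x
  have hgzero : ∀ N (x : X), (∀ k, k < N → x ∉ E k) → g N x = 0 := by
    intro N x h
    simp only [hgdef]
    exact Finset.sum_eq_zero fun n hn => Set.indicator_of_notMem (h n (Finset.mem_range.1 hn)) _
  -- distribution function bounds
  have hd_up : ∀ N (m : ℕ) (t : ℝ), 0 < t → (∀ k, k < N → t ≤ c k → k < m) →
      distFun μ (g N) t ≤ S m := by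
    intro N m t ht h
    simp only [distFun]
    refine measure_mono fun x hx => ?_
    simp only [Set.mem_setOf_eq] at hx
    have hgx : t ≤ g N x := by rwa [abs_of_nonneg (hgnonneg N x)] at hx
    have hxE : ∃ k, k < N ∧ x ∈ E k := by
      by_contra hcon
      push_neg at hcon
      rw [hgzero N x hcon] at hgx
      linarith
    obtain ⟨k, hkN, hxk⟩ := hxE
    have htc : t ≤ c k := by rwa [hgval N k x hkN hxk] at hgx
    exact Set.mem_iUnion₂.2 ⟨k, Finset.mem_range.2 (h k hkN htc), hxk⟩
  have hd_low : ∀ N (n : ℕ) (t : ℝ), n < N → 0 < t → t ≤ c n →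
      S (n + 1) ≤ distFun μ (g N) t := by
    intro N n t hnN ht htc
    simp only [distFun]
    refine measure_mono fun x hx => ?_
    obtain ⟨k, hk, hxk⟩ := Set.mem_iUnion₂.1 hx
    have hkn : k ≤ n := Nat.lt_succ_iff.1 (Finset.mem_range.1 hk)
    have hkN : k < N := lt_of_le_of_lt hkn hnN
    simp only [Set.mem_setOf_eq]
    rw [abs_of_nonneg (hgnonneg N x), hgval N k x hkN hxk]
    exact le_trans htc (hcanti hkn)
  -- integrand simplification
  have hF : ∀ (s' t : ℝ) (A : ℝ≥0∞), 0 < s' → 0 < t →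
      (ENNReal.ofReal t * A ^ (1 / p)) ^ s' / ENNReal.ofReal t
        = ENNReal.ofReal t ^ (s' - 1) * A ^ (1 / p * s') := by
    intro s' t A hs' ht
    have h0 : ENNReal.ofReal t ≠ 0 := (ENNReal.ofReal_pos.2 ht).ne'
    have hT' : ENNReal.ofReal t ≠ ⊤ := ENNReal.ofReal_ne_top
    rw [ENNReal.mul_rpow_of_nonneg _ _ hs'.le, ← ENNReal.rpow_mul]
    have hsplit : ENNReal.ofReal t ^ s' = ENNReal.ofReal t * ENNReal.ofReal t ^ (s' - 1) := by
      calc ENNReal.ofReal t ^ s' = ENNReal.ofReal t ^ (1 + (s' - 1)) := by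
            rw [show (1:ℝ) + (s' - 1) = s' from by ring]
        _ = ENNReal.ofReal t ^ (1:ℝ) * ENNReal.ofReal t ^ (s' - 1) :=
            ENNReal.rpow_add 1 (s' - 1) h0 hT'
        _ = ENNReal.ofReal t * ENNReal.ofReal t ^ (s' - 1) := by rw [ENNReal.rpow_one]
    rw [hsplit, mul_assoc, mul_comm (ENNReal.ofReal t), mul_div_assoc,
      ENNReal.div_self h0 hT', mul_one]
  -- power computations
  have hcpow : ∀ (y : ℝ) (n : ℕ), c n ^ y = ((n : ℝ) + 1) ^ (-(α * y)) * τ n ^ (-(1 / p * y)) := by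
    intro y n
    rw [hcdef]
    simp only
    rw [Real.mul_rpow (Real.rpow_nonneg (by positivity) _) (Real.rpow_nonneg (hτnonneg n) _),
      ← Real.rpow_mul (by positivity), ← Real.rpow_mul (hτnonneg n), neg_mul, neg_mul]
  have hττ : ∀ (y : ℝ) (n : ℕ), τ n ^ y * τ n ^ (-y) = 1 := by
    intro y n
    rw [← Real.rpow_add (hτpos n)]
    norm_num
  have hμτ : ∀ n, μ (E n) = ENNReal.ofReal (τ n) := fun n => (ENNReal.ofReal_toReal (hfin n).ne).symm
  have hkey : ∀ (y : ℝ), 0 < y → ∀ n : ℕ,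
      (μ (E n)) ^ (1 / p * y) * ENNReal.ofReal (c n ^ y)
        = ENNReal.ofReal (((n : ℝ) + 1) ^ (-(α * y))) := by
    intro y hy n
    rw [hμτ n, ENNReal.ofReal_rpow_of_nonneg (hτnonneg n) (by positivity),
      ← ENNReal.ofReal_mul (Real.rpow_nonneg (hτnonneg n) _), hcpow y n]
    congr 1
    have h := hττ (1 / p * y) n
    linear_combination (((n : ℝ) + 1) ^ (-(α * y))) * h
  -- the step function levels
  set B : ℕ → ℕ → ℝ := fun N n => if n < N then c n else 0 with hBdef
  have hB_lt : ∀ N n, n < N → B N n = c n := fun N n h => if_pos h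
  have hB_ge : ∀ N n, ¬ n < N → B N n = 0 := fun N n h => if_neg h
  have hB_nonneg : ∀ N n, 0 ≤ B N n := by
    intro N n
    by_cases h : n < N
    · rw [hB_lt N n h]; exact (hc0 n).le
    · rw [hB_ge N n h]
  have hB_anti : ∀ (N : ℕ) ⦃m n : ℕ⦄, m ≤ n → B N n ≤ B N m := by
    intro N m n hmn
    by_cases h : n < N
    · rw [hB_lt N n h, hB_lt N m (lt_of_le_of_lt hmn h)]; exact hcanti hmn
    · rw [hB_ge N n h]; exact hB_nonneg N m
  have hJdisj : ∀ N : ℕ, (↑(Finset.range N) : Set ℕ).PairwiseDisjoint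
      (fun n => Ioc (B N (n + 1)) (B N n)) := by
    intro N m hm n hn hmn
    have key : ∀ {a b' : ℕ}, a < b' →
        Disjoint (Ioc (B N (a + 1)) (B N a)) (Ioc (B N (b' + 1)) (B N b')) := by
      intro a b' hab
      refine Set.disjoint_left.2 fun t hta htb => ?_
      exact absurd (le_trans htb.2 (hB_anti N hab)) (not_le.2 hta.1)
    rcases lt_or_gt_of_ne hmn with h | h
    · exact key h
    · exact (key h).symm
  -- constants
  set C0 : ℝ := (1 - 2 ^ (-(1 / p * r))) / r with hC0def
  have h2e1 : (2:ℝ) ^ (-(1 / p * r)) < 1 :=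
    Real.rpow_lt_one_of_one_lt_of_neg (by norm_num) (neg_lt_zero.2 (by positivity))
  have hC0pos : 0 < C0 := by rw [hC0def]; exact div_pos (by linarith) hr0
  -- per-term estimate for the lower bound
  have hper : ∀ n : ℕ, C0 * ((n : ℝ) + 1) ^ (-(α * r))
      ≤ (T (n + 1) ^ (1 / p * r) - T n ^ (1 / p * r)) * (c n ^ r / r) := by
    intro n
    have e0 : (0:ℝ) < 1 / p * r := by positivity
    have h1 : T n ^ (1 / p * r) ≤ 2 ^ (-(1 / p * r)) * T (n + 1) ^ (1 / p * r) := by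
      have hhalf : T n ≤ 2⁻¹ * T (n + 1) := by
        have := hT2 n; linarith
      calc T n ^ (1 / p * r) ≤ (2⁻¹ * T (n + 1)) ^ (1 / p * r) :=
            Real.rpow_le_rpow (hTnonneg n) hhalf e0.le
        _ = 2 ^ (-(1 / p * r)) * T (n + 1) ^ (1 / p * r) := by
            rw [Real.mul_rpow (by norm_num) (hTnonneg (n + 1)),
              Real.inv_rpow (by norm_num), ← Real.rpow_neg (by norm_num)]
    have h2 : τ n ^ (1 / p * r) ≤ T (n + 1) ^ (1 / p * r) :=
      Real.rpow_le_rpow (hτnonneg n) (hτT n) e0.le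
    have h3 : (0:ℝ) ≤ 1 - 2 ^ (-(1 / p * r)) := by linarith
    have hW : (1 - 2 ^ (-(1 / p * r))) * τ n ^ (1 / p * r)
        ≤ T (n + 1) ^ (1 / p * r) - T n ^ (1 / p * r) := by
      have h4 := mul_le_mul_of_nonneg_left h2 h3
      nlinarith [h1, h4]
    have hkey2 : C0 * ((n : ℝ) + 1) ^ (-(α * r))
        = ((1 - 2 ^ (-(1 / p * r))) * τ n ^ (1 / p * r)) * (c n ^ r / r) := by
      rw [hC0def, hcpow r n]
      have h := hττ (1 / p * r) n
      linear_combination (-((1 - 2 ^ (-(1 / p * r))) * ((n : ℝ) + 1) ^ (-(α * r)) / r)) * h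
    rw [hkey2]
    exact mul_le_mul_of_nonneg_right hW (by positivity)
  -- lower bound for the (p,r)-norm
  have bound_low : ∀ N : ℕ,
      ENNReal.ofReal (C0 * ∑ n ∈ Finset.range N, ((n : ℝ) + 1) ^ (-(α * r))) ^ (1 / r)
        ≤ lorentzNorm μ p (ENNReal.ofReal r) (g N) := by
    intro N
    have realside : C0 * ∑ n ∈ Finset.range N, ((n : ℝ) + 1) ^ (-(α * r))
        ≤ ∑ n ∈ Finset.range N, T (n + 1) ^ (1 / p * r) * ((B N n ^ r - B N (n + 1) ^ r) / r) := by
      have hW0 : T 0 ^ (1 / p * r) = 0 := by rw [hT0, Real.zero_rpow (by positivity)]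
      have hvN : B N N ^ r / r = 0 := by
        rw [hB_ge N N (lt_irrefl N), Real.zero_rpow hr0.ne', zero_div]
      have habel := abel_ineq (fun n => T n ^ (1 / p * r)) (fun n => B N n ^ r / r)
        (fun n => C0 * ((n : ℝ) + 1) ^ (-(α * r))) N hW0 hvN ?_
      · calc C0 * ∑ n ∈ Finset.range N, ((n : ℝ) + 1) ^ (-(α * r))
            = ∑ n ∈ Finset.range N, C0 * ((n : ℝ) + 1) ^ (-(α * r)) := Finset.mul_sum _ _ _
          _ ≤ ∑ n ∈ Finset.range N, T (n + 1) ^ (1 / p * r) * (B N n ^ r / r - B N (n + 1) ^ r / r) :=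
              habel
          _ = ∑ n ∈ Finset.range N, T (n + 1) ^ (1 / p * r) * ((B N n ^ r - B N (n + 1) ^ r) / r) :=
              Finset.sum_congr rfl fun n _ => by ring
      · intro n hn
        show C0 * ((n : ℝ) + 1) ^ (-(α * r))
          ≤ (T (n + 1) ^ (1 / p * r) - T n ^ (1 / p * r)) * (B N n ^ r / r)
        rw [hB_lt N n hn]
        exact hper n
    have term_nonneg : ∀ n : ℕ,
        0 ≤ T (n + 1) ^ (1 / p * r) * ((B N n ^ r - B N (n + 1) ^ r) / r) := by
      intro n
      have hmono : B N (n + 1) ^ r ≤ B N n ^ r :=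
        Real.rpow_le_rpow (hB_nonneg N (n + 1)) (hB_anti N (Nat.le_succ n)) hr0.le
      have := Real.rpow_nonneg (hTnonneg (n + 1)) (1 / p * r)
      have hd : 0 ≤ (B N n ^ r - B N (n + 1) ^ r) / r := by
        apply div_nonneg _ hr0.le; linarith
      exact mul_nonneg this hd
    have hIr : ENNReal.ofReal (C0 * ∑ n ∈ Finset.range N, ((n : ℝ) + 1) ^ (-(α * r)))
        ≤ ∫⁻ t in Ioi (0:ℝ),
            (ENNReal.ofReal t * distFun μ (g N) t ^ (1 / p)) ^ r / ENNReal.ofReal t := by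
      have perpiece : ∀ n ∈ Finset.range N,
          ENNReal.ofReal (T (n + 1) ^ (1 / p * r) * ((B N n ^ r - B N (n + 1) ^ r) / r))
            ≤ ∫⁻ t in Ioc (B N (n + 1)) (B N n),
                (ENNReal.ofReal t * distFun μ (g N) t ^ (1 / p)) ^ r / ENNReal.ofReal t := by
        intro n hn
        have hnN : n < N := Finset.mem_range.1 hn
        have hSpow_ne_top : S (n + 1) ^ (1 / p * r) ≠ ⊤ :=
          (ENNReal.rpow_lt_top_of_nonneg (by positivity) (hS_fin (n + 1)).ne).ne
        have hd : ∀ t ∈ Ioc (B N (n + 1)) (B N n),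
            S (n + 1) ^ (1 / p * r) * ENNReal.ofReal t ^ (r - 1)
              ≤ (ENNReal.ofReal t * distFun μ (g N) t ^ (1 / p)) ^ r / ENNReal.ofReal t := by
          intro t ht
          have ht0 : 0 < t := lt_of_le_of_lt (hB_nonneg N (n + 1)) ht.1
          rw [hF r t (distFun μ (g N) t) hr0 ht0]
          calc S (n + 1) ^ (1 / p * r) * ENNReal.ofReal t ^ (r - 1)
              = ENNReal.ofReal t ^ (r - 1) * S (n + 1) ^ (1 / p * r) := mul_comm _ _
            _ ≤ ENNReal.ofReal t ^ (r - 1) * distFun μ (g N) t ^ (1 / p * r) :=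
                mul_le_mul_right
                  (ENNReal.rpow_le_rpow
                    (hd_low N n t hnN ht0 ((hB_lt N n hnN) ▸ ht.2)) (by positivity)) _
        calc ENNReal.ofReal (T (n + 1) ^ (1 / p * r) * ((B N n ^ r - B N (n + 1) ^ r) / r))
            = S (n + 1) ^ (1 / p * r) * ENNReal.ofReal ((B N n ^ r - B N (n + 1) ^ r) / r) := by
              rw [ENNReal.ofReal_mul (Real.rpow_nonneg (hTnonneg (n + 1)) _)]
              congr 1
              rw [hSofT (n + 1), ENNReal.ofReal_rpow_of_nonneg (hTnonneg (n + 1)) (by positivity)]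
          _ = S (n + 1) ^ (1 / p * r) * ∫⁻ t in Ioc (B N (n + 1)) (B N n), ENNReal.ofReal t ^ (r - 1) := by
              rw [lintegral_Ioc_rpow (hB_nonneg N (n + 1)) (hB_anti N (Nat.le_succ n)) hr]
          _ = ∫⁻ t in Ioc (B N (n + 1)) (B N n), S (n + 1) ^ (1 / p * r) * ENNReal.ofReal t ^ (r - 1) :=
              (lintegral_const_mul' _ _ hSpow_ne_top).symm
          _ ≤ ∫⁻ t in Ioc (B N (n + 1)) (B N n),
                (ENNReal.ofReal t * distFun μ (g N) t ^ (1 / p)) ^ r / ENNReal.ofReal t :=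
              setLIntegral_mono' measurableSet_Ioc hd
      calc ENNReal.ofReal (C0 * ∑ n ∈ Finset.range N, ((n : ℝ) + 1) ^ (-(α * r)))
          ≤ ENNReal.ofReal (∑ n ∈ Finset.range N,
              T (n + 1) ^ (1 / p * r) * ((B N n ^ r - B N (n + 1) ^ r) / r)) :=
            ENNReal.ofReal_le_ofReal realside
        _ = ∑ n ∈ Finset.range N,
              ENNReal.ofReal (T (n + 1) ^ (1 / p * r) * ((B N n ^ r - B N (n + 1) ^ r) / r)) :=
            ENNReal.ofReal_sum_of_nonneg fun n _ => term_nonneg n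
        _ ≤ ∑ n ∈ Finset.range N, ∫⁻ t in Ioc (B N (n + 1)) (B N n),
              (ENNReal.ofReal t * distFun μ (g N) t ^ (1 / p)) ^ r / ENNReal.ofReal t :=
            Finset.sum_le_sum perpiece
        _ = ∫⁻ t in ⋃ n ∈ Finset.range N, Ioc (B N (n + 1)) (B N n),
              (ENNReal.ofReal t * distFun μ (g N) t ^ (1 / p)) ^ r / ENNReal.ofReal t :=
            (lintegral_biUnion_finset (hJdisj N) (fun n _ => measurableSet_Ioc) _).symm
        _ ≤ ∫⁻ t in Ioi (0:ℝ),
              (ENNReal.ofReal t * distFun μ (g N) t ^ (1 / p)) ^ r / ENNReal.ofReal t := by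
            refine lintegral_mono' (Measure.restrict_mono ?_ le_rfl) le_rfl
            intro t ht
            obtain ⟨n, hn, htn⟩ := Set.mem_iUnion₂.1 ht
            exact lt_of_le_of_lt (hB_nonneg N (n + 1)) htn.1
    have hofp1 : (1:ℝ≥0∞) ≤ ENNReal.ofReal p ^ (1 / r) := by
      have h1 : (1:ℝ≥0∞) ≤ ENNReal.ofReal p := by
        rw [← ENNReal.ofReal_one]; exact ENNReal.ofReal_le_ofReal (by linarith)
      calc (1:ℝ≥0∞) = 1 ^ (1 / r) := (ENNReal.one_rpow _).symm
        _ ≤ ENNReal.ofReal p ^ (1 / r) := ENNReal.rpow_le_rpow h1 (by positivity)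
    simp only [lorentzNorm, if_neg ENNReal.ofReal_ne_top, ENNReal.toReal_ofReal hr0.le]
    calc ENNReal.ofReal (C0 * ∑ n ∈ Finset.range N, ((n : ℝ) + 1) ^ (-(α * r))) ^ (1 / r)
        ≤ (∫⁻ t in Ioi (0:ℝ),
            (ENNReal.ofReal t * distFun μ (g N) t ^ (1 / p)) ^ r / ENNReal.ofReal t) ^ (1 / r) :=
          ENNReal.rpow_le_rpow hIr (by positivity)
      _ = 1 * (∫⁻ t in Ioi (0:ℝ),
            (ENNReal.ofReal t * distFun μ (g N) t ^ (1 / p)) ^ r / ENNReal.ofReal t) ^ (1 / r) :=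
          (one_mul _).symm
      _ ≤ ENNReal.ofReal p ^ (1 / r) * (∫⁻ t in Ioi (0:ℝ),
            (ENNReal.ofReal t * distFun μ (g N) t ^ (1 / p)) ^ r / ENNReal.ofReal t) ^ (1 / r) :=
          mul_le_mul_left hofp1 _
  -- upper bound for the (p,q)-norm
  set Kq : ℝ := ∑' n : ℕ, ((n : ℝ) + 1) ^ (-(α * q)) with hKqdef
  set Cq : ℝ≥0∞ := ENNReal.ofReal p ^ (1 / q) *
    ((2:ℝ≥0∞) ^ (1 / p * q) * ENNReal.ofReal Kq) ^ (1 / q) with hCqdef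
  have hCq_ne_top : Cq ≠ ⊤ := by
    rw [hCqdef]
    refine ENNReal.mul_ne_top ?_ ?_
    · exact (ENNReal.rpow_lt_top_of_nonneg (by positivity) ENNReal.ofReal_ne_top).ne
    · refine (ENNReal.rpow_lt_top_of_nonneg (by positivity) ?_).ne
      exact ENNReal.mul_ne_top
        (ENNReal.rpow_lt_top_of_nonneg (by positivity) (by norm_num)).ne ENNReal.ofReal_ne_top
  have bound_up : ∀ N : ℕ, 1 ≤ N → lorentzNorm μ p (ENNReal.ofReal q) (g N) ≤ Cq := by
    intro N hN1
    have cover : Ioi (0:ℝ) ⊆ (⋃ n ∈ Finset.range N, Ioc (B N (n + 1)) (B N n)) ∪ Ioi (c 0) := by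
      intro t ht
      simp only [Set.mem_Ioi] at ht
      by_cases h0 : c 0 < t
      · exact Or.inr h0
      push_neg at h0
      left
      have hex : ∃ m, B N m < t := ⟨N, by rw [hB_ge N N (lt_irrefl N)]; exact ht⟩
      have hm := Nat.find_spec hex
      have hm0 : Nat.find hex ≠ 0 := by
        intro h
        rw [h, hB_lt N 0 hN1] at hm
        exact absurd hm (not_lt.2 h0)
      obtain ⟨n, hn⟩ : ∃ n, Nat.find hex = n + 1 :=
        ⟨Nat.find hex - 1, (Nat.succ_pred_eq_of_ne_zero hm0).symm⟩
      have hnt : t ≤ B N n := not_lt.1 (Nat.find_min hex (by omega))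
      have hnN : n < N := by
        by_contra hge
        rw [hB_ge N n hge] at hnt
        linarith
      rw [hn] at hm
      exact Set.mem_iUnion₂.2 ⟨n, Finset.mem_range.2 hnN, hm, hnt⟩
    have tail0 : ∫⁻ t in Ioi (c 0),
        (ENNReal.ofReal t * distFun μ (g N) t ^ (1 / p)) ^ q / ENNReal.ofReal t = 0 := by
      have hzero : ∀ t ∈ Ioi (c 0),
          (ENNReal.ofReal t * distFun μ (g N) t ^ (1 / p)) ^ q / ENNReal.ofReal t = 0 := by
        intro t ht
        have ht0 : 0 < t := (hc0 0).trans ht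
        have hd0 : distFun μ (g N) t = 0 := by
          refine le_antisymm ?_ zero_le
          have h := hd_up N 0 t ht0 (fun k hkN hck =>
            absurd hck (not_le.2 (lt_of_le_of_lt (hcanti (Nat.zero_le k)) ht)))
          rwa [hS0] at h
        rw [hd0, ENNReal.zero_rpow_of_pos (by positivity), mul_zero,
          ENNReal.zero_rpow_of_pos hq0, ENNReal.zero_div]
      rw [setLIntegral_congr_fun measurableSet_Ioi hzero, lintegral_zero]
    have perq : ∀ n ∈ Finset.range N,
        ∫⁻ t in Ioc (B N (n + 1)) (B N n),
            (ENNReal.ofReal t * distFun μ (g N) t ^ (1 / p)) ^ q / ENNReal.ofReal t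
          ≤ (2:ℝ≥0∞) ^ (1 / p * q) * ENNReal.ofReal (((n : ℝ) + 1) ^ (-(α * q))) := by
      intro n hn
      have hnN : n < N := Finset.mem_range.1 hn
      have hcq1 : ENNReal.ofReal (c n) ^ (q - 1) * ENNReal.ofReal (c n)
          = ENNReal.ofReal (c n) ^ q := by
        have h0 : ENNReal.ofReal (c n) ≠ 0 := (ENNReal.ofReal_pos.2 (hc0 n)).ne'
        nth_rewrite 2 [← ENNReal.rpow_one (ENNReal.ofReal (c n))]
        rw [← ENNReal.rpow_add _ _ h0 ENNReal.ofReal_ne_top, sub_add_cancel]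
      have hconst : ∀ t ∈ Ioc (B N (n + 1)) (B N n),
          (ENNReal.ofReal t * distFun μ (g N) t ^ (1 / p)) ^ q / ENNReal.ofReal t
            ≤ ENNReal.ofReal (c n) ^ (q - 1) * (2 * μ (E n)) ^ (1 / p * q) := by
        intro t ht
        have ht0 : 0 < t := lt_of_le_of_lt (hB_nonneg N (n + 1)) ht.1
        rw [hF q t (distFun μ (g N) t) hq0 ht0]
        refine mul_le_mul' ?_ ?_
        · exact ENNReal.rpow_le_rpow
            (ENNReal.ofReal_le_ofReal ((hB_lt N n hnN) ▸ ht.2)) (by linarith)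
        · refine ENNReal.rpow_le_rpow ?_ (by positivity)
          refine le_trans (hd_up N (n + 1) t ht0 ?_) ?_
          · intro k hkN hck
            by_contra hk
            push_neg at hk
            have hn1N : n + 1 < N := lt_of_le_of_lt hk hkN
            have hck' : c k ≤ B N (n + 1) := by
              rw [hB_lt N (n + 1) hn1N]; exact hcanti hk
            exact absurd (le_trans hck hck') (not_le.2 ht.1)
          · rw [hS_succ n, two_mul]
            exact add_le_add_left (hgrow' n) _
      calc ∫⁻ t in Ioc (B N (n + 1)) (B N n),
              (ENNReal.ofReal t * distFun μ (g N) t ^ (1 / p)) ^ q / ENNReal.ofReal t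
          ≤ ∫⁻ _ in Ioc (B N (n + 1)) (B N n),
              ENNReal.ofReal (c n) ^ (q - 1) * (2 * μ (E n)) ^ (1 / p * q) :=
            setLIntegral_mono' measurableSet_Ioc hconst
        _ = ENNReal.ofReal (c n) ^ (q - 1) * (2 * μ (E n)) ^ (1 / p * q)
              * volume (Ioc (B N (n + 1)) (B N n)) := setLIntegral_const _ _
        _ ≤ ENNReal.ofReal (c n) ^ (q - 1) * (2 * μ (E n)) ^ (1 / p * q)
              * ENNReal.ofReal (c n) := by
            refine mul_le_mul_right ?_ _
            rw [Real.volume_Ioc]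
            refine ENNReal.ofReal_le_ofReal ?_
            have h1 := hB_nonneg N (n + 1)
            have h2 : B N n = c n := hB_lt N n hnN
            linarith [le_of_eq h2]
        _ = (2 * μ (E n)) ^ (1 / p * q)
              * (ENNReal.ofReal (c n) ^ (q - 1) * ENNReal.ofReal (c n)) := by ring
        _ = (2 * μ (E n)) ^ (1 / p * q) * ENNReal.ofReal (c n) ^ q := by rw [hcq1]
        _ = (2:ℝ≥0∞) ^ (1 / p * q) * ENNReal.ofReal (((n : ℝ) + 1) ^ (-(α * q))) := by
            rw [ENNReal.mul_rpow_of_nonneg _ _ (by positivity), mul_assoc]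
            congr 1
            rw [ENNReal.ofReal_rpow_of_nonneg (hc0 n).le hq0.le]
            exact hkey q hq0 n
    have hIq : (∫⁻ t in Ioi (0:ℝ),
        (ENNReal.ofReal t * distFun μ (g N) t ^ (1 / p)) ^ q / ENNReal.ofReal t)
          ≤ (2:ℝ≥0∞) ^ (1 / p * q) * ENNReal.ofReal Kq := by
      calc (∫⁻ t in Ioi (0:ℝ),
              (ENNReal.ofReal t * distFun μ (g N) t ^ (1 / p)) ^ q / ENNReal.ofReal t)
          ≤ ∫⁻ t in (⋃ n ∈ Finset.range N, Ioc (B N (n + 1)) (B N n)) ∪ Ioi (c 0),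
              (ENNReal.ofReal t * distFun μ (g N) t ^ (1 / p)) ^ q / ENNReal.ofReal t :=
            lintegral_mono' (Measure.restrict_mono cover le_rfl) le_rfl
        _ ≤ (∫⁻ t in ⋃ n ∈ Finset.range N, Ioc (B N (n + 1)) (B N n),
              (ENNReal.ofReal t * distFun μ (g N) t ^ (1 / p)) ^ q / ENNReal.ofReal t)
            + ∫⁻ t in Ioi (c 0),
              (ENNReal.ofReal t * distFun μ (g N) t ^ (1 / p)) ^ q / ENNReal.ofReal t :=
            lintegral_union_le _ _ _
        _ = (∑ n ∈ Finset.range N, ∫⁻ t in Ioc (B N (n + 1)) (B N n),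
              (ENNReal.ofReal t * distFun μ (g N) t ^ (1 / p)) ^ q / ENNReal.ofReal t)
            + ∫⁻ t in Ioi (c 0),
              (ENNReal.ofReal t * distFun μ (g N) t ^ (1 / p)) ^ q / ENNReal.ofReal t := by
            rw [lintegral_biUnion_finset (hJdisj N) (fun n _ => measurableSet_Ioc)]
        _ ≤ (∑ n ∈ Finset.range N,
              (2:ℝ≥0∞) ^ (1 / p * q) * ENNReal.ofReal (((n : ℝ) + 1) ^ (-(α * q)))) + 0 :=
            add_le_add (Finset.sum_le_sum perq) (le_of_eq tail0)
        _ = (2:ℝ≥0∞) ^ (1 / p * q)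
              * ∑ n ∈ Finset.range N, ENNReal.ofReal (((n : ℝ) + 1) ^ (-(α * q))) := by
            rw [add_zero, Finset.mul_sum]
        _ = (2:ℝ≥0∞) ^ (1 / p * q)
              * ENNReal.ofReal (∑ n ∈ Finset.range N, ((n : ℝ) + 1) ^ (-(α * q))) := by
            rw [ENNReal.ofReal_sum_of_nonneg fun n _ => Real.rpow_nonneg (by positivity) _]
        _ ≤ (2:ℝ≥0∞) ^ (1 / p * q) * ENNReal.ofReal Kq := by
            refine mul_le_mul_right (ENNReal.ofReal_le_ofReal ?_) _
            exact Summable.sum_le_tsum _ (fun n _ => Real.rpow_nonneg (by positivity) _)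
              (summable_shift_rpow hαq1)
    simp only [lorentzNorm, if_neg ENNReal.ofReal_ne_top, ENNReal.toReal_ofReal hq0.le]
    rw [hCqdef]
    exact mul_le_mul_right (ENNReal.rpow_le_rpow hIq (by positivity)) _
  -- final assembly
  have hmain : ∀ N : ℕ, 1 ≤ N →
      ENNReal.ofReal (C0 * ∑ n ∈ Finset.range N, ((n : ℝ) + 1) ^ (-(α * r))) ^ (1 / r) * Cq⁻¹
        ≤ lorentzNorm μ p (ENNReal.ofReal r) (g N)
            / lorentzNorm μ p (ENNReal.ofReal q) (g N) := by
    intro N hN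
    calc ENNReal.ofReal (C0 * ∑ n ∈ Finset.range N, ((n : ℝ) + 1) ^ (-(α * r))) ^ (1 / r) * Cq⁻¹
        = ENNReal.ofReal (C0 * ∑ n ∈ Finset.range N, ((n : ℝ) + 1) ^ (-(α * r))) ^ (1 / r) / Cq :=
          (div_eq_mul_inv _ _).symm
      _ ≤ lorentzNorm μ p (ENNReal.ofReal r) (g N) / Cq :=
          ENNReal.div_le_div_right (bound_low N) _
      _ ≤ lorentzNorm μ p (ENNReal.ofReal r) (g N)
            / lorentzNorm μ p (ENNReal.ofReal q) (g N) :=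
          ENNReal.div_le_div_left (bound_up N hN) _
  have htend : Tendsto (fun N : ℕ =>
      ENNReal.ofReal (C0 * ∑ n ∈ Finset.range N, ((n : ℝ) + 1) ^ (-(α * r))) ^ (1 / r) * Cq⁻¹)
      atTop (nhds ⊤) := by
    have h1 : Tendsto (fun N : ℕ => C0 * ∑ n ∈ Finset.range N, ((n : ℝ) + 1) ^ (-(α * r)))
        atTop atTop :=
      (tendsto_sum_rpow_atTop hαr1).const_mul_atTop hC0pos
    have h2 : Tendsto (fun N : ℕ =>
        ENNReal.ofReal (C0 * ∑ n ∈ Finset.range N, ((n : ℝ) + 1) ^ (-(α * r))))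
        atTop (nhds ⊤) := ENNReal.tendsto_ofReal_atTop.comp h1
    have h3 : Tendsto (fun x : ℝ≥0∞ => x ^ (1 / r)) (nhds ⊤) (nhds ⊤) := by
      have hc := (ENNReal.continuous_rpow_const (y := 1 / r)).tendsto ⊤
      rwa [ENNReal.top_rpow_of_pos (by positivity)] at hc
    have h4 := h3.comp h2
    have h5 := ENNReal.Tendsto.mul_const (b := Cq⁻¹) h4 (Or.inl top_ne_zero)
    rwa [ENNReal.top_mul (ENNReal.inv_ne_zero.2 hCq_ne_top)] at h5
  refine tendsto_nhds_top_mono htend ?_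
  filter_upwards [eventually_ge_atTop 1] with N hN
  exact hmain N hN
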